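/- Let k, n be real parameters and let y : (0,∞) → ℝ be three times differentiable with y′(x)·(y′(x) − 1) ≠ 0 for all x > 0, satisfying y‴ = (1/2)(1/y′ + 1/(y′−1))(y″)² − y″/x − [2(k+n)/x]·y′(y′−1) + [(x+n)/(2x²)]·(n − x + 2y) − (n+y)²/(2x² y′) − (x−y)²/(2x²(y′−1)) for all x > 0. Then there exists a constant K₁ such that for all x > 0: x²(y″)² = −4(k+n)x(y′)³ + {4(k+n)y + x² + 2(2k+3n)x}(y′)² − {2(x+2k+3n)y + 2nx + n²}y′ + (y+n)² − 4K₁ y′(y′ − 1). -/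

import Mathlib

/-- The Tracy–Widom third-order equation (5.23) admits the first integral (5.24):
a second-order second-degree equation of Chazy type SD-I.b with integration
constant `K₁`. -/
theorem tracy_widom_first_integral (k n : ℝ) (y : ℝ → ℝ)
    (hy : ∀ x > (0:ℝ), DifferentiableAt ℝ y x)
    (hy' : ∀ x > (0:ℝ), DifferentiableAt ℝ (deriv y) x)
    (hy'' : ∀ x > (0:ℝ), DifferentiableAt ℝ (deriv (deriv y)) x)
    (hne : ∀ x > (0:ℝ), deriv y x * (deriv y x - 1) ≠ 0)
    (hode : ∀ x > (0:ℝ), deriv (deriv (deriv y)) x =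
      (1 / 2) * (1 / deriv y x + 1 / (deriv y x - 1)) * (deriv (deriv y) x) ^ 2
        - deriv (deriv y) x / x
        - 2 * (k + n) / x * deriv y x * (deriv y x - 1)
        + (x + n) / (2 * x ^ 2) * (n - x + 2 * y x)
        - (n + y x) ^ 2 / (2 * x ^ 2 * deriv y x)
        - (x - y x) ^ 2 / (2 * x ^ 2 * (deriv y x - 1))) :
    ∃ K₁ : ℝ, ∀ x > (0:ℝ),
      x ^ 2 * (deriv (deriv y) x) ^ 2 =
        -4 * (k + n) * x * (deriv y x) ^ 3
          + (4 * (k + n) * y x + x ^ 2 + 2 * (2 * k + 3 * n) * x) * (deriv y x) ^ 2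
          - (2 * (x + 2 * k + 3 * n) * y x + 2 * n * x + n ^ 2) * deriv y x
          + (y x + n) ^ 2 - 4 * K₁ * deriv y x * (deriv y x - 1) := by
  set g : ℝ → ℝ := fun t =>
    (t * t * (deriv (deriv y) t * deriv (deriv y) t)
        + 4 * (k + n) * (t * (deriv y t * (deriv y t * deriv y t)))
        - (4 * (k + n) * y t + t * t + 2 * (2 * k + 3 * n) * t) * (deriv y t * deriv y t)
        + (2 * ((t + (2 * k + 3 * n)) * y t) + (2 * n * t + n * n)) * deriv y t
        - (y t + n) * (y t + n)) / (deriv y t * (deriv y t - 1)) with hgdef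
  have hg : ∀ x > (0:ℝ), HasDerivAt g 0 x := by
    intro x hx
    have hx0 : x ≠ 0 := ne_of_gt hx
    obtain ⟨hb, hb1⟩ := mul_ne_zero_iff.1 (hne x hx)
    have hyx : HasDerivAt y (deriv y x) x := (hy x hx).hasDerivAt
    have hUx : HasDerivAt (deriv y) (deriv (deriv y) x) x := (hy' x hx).hasDerivAt
    have hVx : HasDerivAt (deriv (deriv y)) (deriv (deriv (deriv y)) x) x :=
      (hy'' x hx).hasDerivAt
    have hid : HasDerivAt (fun t : ℝ => t) 1 x := hasDerivAt_id' x
    have hnum := ((((hid.mul hid).mul (hVx.mul hVx)).add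
        ((hid.mul (hUx.mul (hUx.mul hUx))).const_mul (4 * (k + n)))).sub
        ((((hyx.const_mul (4 * (k + n))).add (hid.mul hid)).add
          (hid.const_mul (2 * (2 * k + 3 * n)))).mul (hUx.mul hUx))).add
        (((((hid.add_const (2 * k + 3 * n)).mul hyx).const_mul 2).add
          ((hid.const_mul (2 * n)).add_const (n * n))).mul hUx)
    have hnum2 := hnum.sub ((hyx.add_const n).mul (hyx.add_const n))
    have hden := hUx.mul (hUx.sub_const 1)
    have hq := hnum2.div hden (hne x hx)
    refine hq.congr_deriv ?_
    rw [hode x hx]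
    simp only [Pi.mul_apply, Pi.add_apply, Pi.sub_apply, Pi.div_apply]
    field_simp
    ring
  have hmem : ∀ x > (0:ℝ), x ∈ Set.Ioi (0:ℝ) := fun x hx => Set.mem_Ioi.2 hx
  have hgdiff : DifferentiableOn ℝ g (Set.Ioi 0) := fun t ht =>
    ((hg t ht).differentiableAt).differentiableWithinAt
  have hfz : ∀ t ∈ Set.Ioi (0:ℝ), fderivWithin ℝ g (Set.Ioi 0) t = 0 := by
    intro t ht
    rw [fderivWithin_of_isOpen isOpen_Ioi ht]
    have h := (hg t ht).hasFDerivAt.fderiv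
    rw [h]
    ext
    simp
  refine ⟨-(g 1) / 4, ?_⟩
  intro x hx
  have hcst : g x = g 1 :=
    (convex_Ioi (0:ℝ)).is_const_of_fderivWithin_eq_zero hgdiff hfz (hmem x hx) (by norm_num)
  have hH : (x * x * (deriv (deriv y) x * deriv (deriv y) x)
        + 4 * (k + n) * (x * (deriv y x * (deriv y x * deriv y x)))
        - (4 * (k + n) * y x + x * x + 2 * (2 * k + 3 * n) * x) * (deriv y x * deriv y x)
        + (2 * ((x + (2 * k + 3 * n)) * y x) + (2 * n * x + n * n)) * deriv y x
        - (y x + n) * (y x + n)) = g x * (deriv y x * (deriv y x - 1)) :=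
    (div_mul_cancel₀ _ (hne x hx)).symm
  rw [hcst] at hH
  linear_combination hH
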